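/- Let (𝔻, d) be a metric space, x ∈ 𝔻 a fixed point regarded as a constant random variable, and X_n^θ : Ω → 𝔻 (θ ∈ Θ, n ∈ ℕ) Borel-measurable maps. Then sup_{θ∈Θ} d_BL(X_n^θ, x) → 0 as n → ∞ if and only if for every ε > 0, sup_{θ∈Θ} ℙ( d(X_n^θ, x) > ε ) → 0 as n → ∞. -/

import Mathlib

open MeasureTheory Filter Topology

/-- The bounded Lipschitz distance between (the laws of) two `𝔻`-valued random variables:
the supremum of `|E f(X) − E f(Y)|` over all `f : 𝔻 → ℝ` bounded by `1` and `1`-Lipschitz. -/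
noncomputable def dBL {Ω 𝔻 : Type*} [MeasurableSpace Ω] (P : Measure Ω)
    [PseudoMetricSpace 𝔻] (X Y : Ω → 𝔻) : ℝ :=
  ⨆ f : {f : 𝔻 → ℝ // (∀ x, |f x| ≤ 1) ∧ LipschitzWith 1 f},
    |(∫ ω, f.1 (X ω) ∂P) - ∫ ω, f.1 (Y ω) ∂P|

section Aux

variable {Ω 𝔻 : Type*} [MeasurableSpace Ω] {P : Measure Ω} [IsProbabilityMeasure P]
  [MetricSpace 𝔻] [MeasurableSpace 𝔻] [BorelSpace 𝔻] {X : Ω → 𝔻} {x : 𝔻}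


lemma blf_nonempty : Nonempty ({f : 𝔻 → ℝ // (∀ x, |f x| ≤ 1) ∧ LipschitzWith 1 f}) :=
  ⟨⟨fun _ => 0, fun _ => by simp, LipschitzWith.const' 0⟩⟩

lemma blf_integrable (hX : Measurable X) (f : {f : 𝔻 → ℝ // (∀ x, |f x| ≤ 1) ∧ LipschitzWith 1 f}) :
    Integrable (fun ω => f.1 (X ω)) P :=
  (integrable_const (1 : ℝ)).mono'
    ((f.2.2.continuous.measurable.comp hX).aestronglyMeasurable)
    (ae_of_all _ fun ω => by simpa using f.2.1 (X ω))

lemma blf_integral_abs_le (hX : Measurable X) (f : {f : 𝔻 → ℝ // (∀ x, |f x| ≤ 1) ∧ LipschitzWith 1 f}) :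
    |∫ ω, f.1 (X ω) ∂P| ≤ 1 := by
  have := norm_integral_le_of_norm_le_const (μ := P) (f := fun ω => f.1 (X ω)) (C := 1)
    (ae_of_all _ fun ω => by simpa using f.2.1 (X ω))
  simpa using this

lemma blf_term_le_two (hX : Measurable X) (f : {f : 𝔻 → ℝ // (∀ x, |f x| ≤ 1) ∧ LipschitzWith 1 f}) :
    |(∫ ω, f.1 (X ω) ∂P) - ∫ ω, f.1 ((fun _ : Ω => x) ω) ∂P| ≤ 2 := by
  have h1 := blf_integral_abs_le (P := P) hX f
  have h2 : |∫ ω, f.1 ((fun _ : Ω => x) ω) ∂P| ≤ 1 := by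
    simp only [integral_const, measure_univ, ENNReal.toReal_one, probReal_univ, one_smul]
    exact f.2.1 x
  calc |(∫ ω, f.1 (X ω) ∂P) - ∫ ω, f.1 ((fun _ : Ω => x) ω) ∂P|
      ≤ |∫ ω, f.1 (X ω) ∂P| + |∫ ω, f.1 ((fun _ : Ω => x) ω) ∂P| := abs_sub _ _
    _ ≤ 2 := by linarith

lemma dBL_bddAbove (hX : Measurable X) :
    BddAbove (Set.range fun f : {f : 𝔻 → ℝ // (∀ x, |f x| ≤ 1) ∧ LipschitzWith 1 f} =>
      |(∫ ω, f.1 (X ω) ∂P) - ∫ ω, f.1 ((fun _ : Ω => x) ω) ∂P|) :=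
  ⟨2, by rintro _ ⟨f, rfl⟩; exact blf_term_le_two hX f⟩

lemma dBL_nonneg' (hX : Measurable X) : 0 ≤ dBL P X (fun _ => x) := by
  have := blf_nonempty (𝔻 := 𝔻)
  exact le_ciSup_of_le (dBL_bddAbove hX) this.some (abs_nonneg _)

lemma dBL_le_two (hX : Measurable X) : dBL P X (fun _ => x) ≤ 2 := by
  have := blf_nonempty (𝔻 := 𝔻)
  exact ciSup_le fun f => blf_term_le_two hX f

lemma lemA {ε : ℝ} (hX : Measurable X) (hε : 0 < ε) :
    min ε 1 * (P {ω | ε < dist (X ω) x}).toReal ≤ dBL P X (fun _ => x) := by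
  have := blf_nonempty (𝔻 := 𝔻)
  set g : 𝔻 → ℝ := fun y => min (dist y x) 1 with hg
  have hgmem : (∀ y, |g y| ≤ 1) ∧ LipschitzWith 1 g := by
    constructor
    · intro y
      rw [abs_of_nonneg (le_min dist_nonneg zero_le_one)]
      exact min_le_right _ _
    · exact (LipschitzWith.dist_left x).min_const 1
  set F : {f : 𝔻 → ℝ // (∀ x, |f x| ≤ 1) ∧ LipschitzWith 1 f} := ⟨g, hgmem⟩
  have hA : MeasurableSet {ω | ε < dist (X ω) x} :=
    ((LipschitzWith.dist_left x).continuous.measurable.comp hX) measurableSet_Ioi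
  have hint : Integrable (fun ω => g (X ω)) P := blf_integrable hX F
  have h1 : min ε 1 * (P {ω | ε < dist (X ω) x}).toReal
      ≤ ∫ ω in {ω | ε < dist (X ω) x}, g (X ω) ∂P := by
    refine setIntegral_ge_of_const_le_real hA (measure_ne_top _ _) (fun ω hω => ?_)
      hint.integrableOn
    exact le_min (le_trans (min_le_left _ _) (le_of_lt hω)) (min_le_right _ _)
  have h2 : ∫ ω in {ω | ε < dist (X ω) x}, g (X ω) ∂P ≤ ∫ ω, g (X ω) ∂P :=
    setIntegral_le_integral hint (ae_of_all _ fun ω => le_min dist_nonneg zero_le_one)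
  have h3 : ∫ ω, g (X ω) ∂P ≤ dBL P X (fun _ => x) := by
    have hx0 : ∫ ω, g ((fun _ : Ω => x) ω) ∂P = 0 := by
      simp [hg]
    have hnn : 0 ≤ ∫ ω, g (X ω) ∂P :=
      integral_nonneg fun ω => le_min dist_nonneg zero_le_one
    have := le_ciSup (dBL_bddAbove (P := P) (x := x) hX) F
    calc ∫ ω, g (X ω) ∂P = |(∫ ω, g (X ω) ∂P) - ∫ ω, g ((fun _ : Ω => x) ω) ∂P| := by
          rw [hx0, sub_zero, abs_of_nonneg hnn]
      _ ≤ _ := this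
  linarith

lemma lemB {ε : ℝ} (hX : Measurable X) (hε : 0 < ε) :
    dBL P X (fun _ => x) ≤ ε + 2 * (P {ω | ε < dist (X ω) x}).toReal := by
  have := blf_nonempty (𝔻 := 𝔻)
  refine ciSup_le fun f => ?_
  set A := {ω | ε < dist (X ω) x} with hA
  have hAm : MeasurableSet A := ((LipschitzWith.dist_left x).continuous.measurable.comp hX) measurableSet_Ioi
  have hfx : ∫ ω, f.1 ((fun _ : Ω => x) ω) ∂P = f.1 x := by
    simp
  have hint : Integrable (fun ω => f.1 (X ω)) P := blf_integrable hX f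
  have hptwise : ∀ ω, |f.1 (X ω) - f.1 x| ≤ ε + 2 * A.indicator (fun _ => (1 : ℝ)) ω := by
    intro ω
    by_cases hω : ω ∈ A
    · rw [Set.indicator_of_mem hω]
      have := abs_sub (f.1 (X ω)) (f.1 x)
      have h1 := f.2.1 (X ω); have h2 := f.2.1 x
      calc |f.1 (X ω) - f.1 x| ≤ |f.1 (X ω)| + |f.1 x| := abs_sub _ _
        _ ≤ 2 := by linarith
        _ ≤ ε + 2 * 1 := by linarith
    · rw [Set.indicator_of_notMem hω]
      have hd : dist (X ω) x ≤ ε := le_of_not_gt hω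
      have := f.2.2.dist_le_mul (X ω) x
      rw [Real.dist_eq] at this
      simpa using this.trans (by simpa using hd)
  have hind : Integrable (fun ω => ε + 2 * A.indicator (fun _ => (1 : ℝ)) ω) P := by
    refine (integrable_const ε).add (Integrable.const_mul ?_ 2)
    exact (integrable_const (1 : ℝ)).indicator hAm
  calc |(∫ ω, f.1 (X ω) ∂P) - ∫ ω, f.1 ((fun _ : Ω => x) ω) ∂P|
      = |∫ ω, (f.1 (X ω) - f.1 x) ∂P| := by
        rw [hfx, integral_sub hint (integrable_const _), integral_const]
        simp
    _ ≤ ∫ ω, |f.1 (X ω) - f.1 x| ∂P := by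
        simpa using norm_integral_le_integral_norm (μ := P) (f := fun ω => f.1 (X ω) - f.1 x)
    _ ≤ ∫ ω, (ε + 2 * A.indicator (fun _ => (1 : ℝ)) ω) ∂P := by
        refine integral_mono ((hint.sub (integrable_const _)).abs) hind hptwise
    _ = ε + 2 * (P A).toReal := by
        rw [integral_add (integrable_const _) (Integrable.const_mul
          ((integrable_const (1 : ℝ)).indicator hAm) 2), integral_const,
          integral_const_mul, integral_indicator hAm]
        simp [measureReal_def]

end Aux

/-- Uniform convergence in distribution to a constant is equivalent to uniform convergence
in probability to that constant. -/
theorem dBL_const_iff_prob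
    {Ω 𝔻 Θ : Type*} [MeasurableSpace Ω] (P : Measure Ω) [IsProbabilityMeasure P]
    [MetricSpace 𝔻] [MeasurableSpace 𝔻] [BorelSpace 𝔻] [Nonempty Θ]
    (x : 𝔻) (Xn : ℕ → Θ → Ω → 𝔻) (hXn : ∀ n θ, Measurable (Xn n θ)) :
    Tendsto (fun n => ⨆ θ, dBL P (Xn n θ) fun _ => x) atTop (𝓝 0) ↔
      ∀ ε > (0 : ℝ),
        Tendsto (fun n => ⨆ θ, P {ω | ε < dist (Xn n θ ω) x}) atTop (𝓝 0) := by
  set S : ℕ → ℝ := fun n => ⨆ θ, dBL P (Xn n θ) fun _ => x with hS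
  have hbdd : ∀ n, BddAbove (Set.range fun θ => dBL P (Xn n θ) fun _ => x) := fun n =>
    ⟨2, by rintro _ ⟨θ, rfl⟩; exact dBL_le_two (P := P) (x := x) (hXn n θ)⟩
  constructor
  · intro h ε hε
    set m := min ε 1 with hm
    have hm0 : 0 < m := lt_min hε one_pos
    have key : ∀ n, (⨆ θ, P {ω | ε < dist (Xn n θ ω) x}) ≤ ENNReal.ofReal (S n / m) := by
      intro n
      refine iSup_le fun θ => ?_
      have hQ : P {ω | ε < dist (Xn n θ ω) x} ≠ ⊤ := measure_ne_top _ _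
      have h1 : (P {ω | ε < dist (Xn n θ ω) x}).toReal ≤ S n / m := by
        rw [le_div_iff₀ hm0, mul_comm]
        exact (lemA (P := P) (x := x) (hXn n θ) hε).trans (le_ciSup (hbdd n) θ)
      calc P {ω | ε < dist (Xn n θ ω) x}
          = ENNReal.ofReal (P {ω | ε < dist (Xn n θ ω) x}).toReal := by
            rw [ENNReal.ofReal_toReal hQ]
        _ ≤ ENNReal.ofReal (S n / m) := ENNReal.ofReal_le_ofReal h1
    have hupper : Tendsto (fun n => ENNReal.ofReal (S n / m)) atTop (𝓝 0) := by
      have : Tendsto (fun n => S n / m) atTop (𝓝 (0 / m)) := h.div_const m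
      rw [zero_div] at this
      simpa using ENNReal.tendsto_ofReal this
    exact tendsto_of_tendsto_of_tendsto_of_le_of_le tendsto_const_nhds hupper
      (fun n => zero_le) key
  · intro h
    rw [Metric.tendsto_atTop]
    intro δ hδ
    have h4 := h (δ / 4) (by linarith)
    rw [ENNReal.tendsto_nhds_zero] at h4
    have h8 : (0:ℝ) < δ / 8 := by linarith
    obtain ⟨N, hN⟩ := eventually_atTop.mp
      (h4 (ENNReal.ofReal (δ / 8)) (by simp [ENNReal.ofReal_pos, h8]))
    refine ⟨N, fun n hn => ?_⟩
    have hQ : ∀ θ, (P {ω | δ / 4 < dist (Xn n θ ω) x}).toReal ≤ δ / 8 := by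
      intro θ
      refine ENNReal.toReal_le_of_le_ofReal h8.le ?_
      exact (le_iSup (fun θ => P {ω | δ / 4 < dist (Xn n θ ω) x}) θ).trans (hN n hn)
    have hSn : S n ≤ δ / 2 := by
      refine ciSup_le fun θ => ?_
      have := lemB (P := P) (x := x) (hXn n θ) (show (0:ℝ) < δ / 4 by linarith)
      linarith [hQ θ]
    have hSnn : 0 ≤ S n := Real.iSup_nonneg fun θ => dBL_nonneg' (P := P) (x := x) (hXn n θ)
    rw [Real.dist_eq, sub_zero, abs_of_nonneg hSnn]
    linarith
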